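/- arXiv:2401.02264 — 3 statements merged into one kernel-verified Lean document; each statement's English description precedes it below -/
import Mathlib

section
/- Let L : C ⊣ R : D be an adjunction between categories C and D admitting pullbacks, and let x be an object of C. Then the induced functor L : C/x → D/L(x) on slice categories admits a right adjoint, given by the composite of R : D/L(x) → C/(R L x) with pullback along the unit η_x : x → R L x. -/
open CategoryTheory CategoryTheory.Limits

/-- Let `L ⊣ R` be an adjunction between categories `C` and `D` admitting
pullbacks, and let `x : C`.  Then the induced functor `L : C/x ⥤ D/L(x)` on slice categories
admits a right adjoint, given by the composite of `R : D/L(x) ⥤ C/(R L x)` with pullback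
along the unit `η_x : x ⟶ R L x`. -/
theorem stmt_0 {C : Type*} {D : Type*} [Category C] [Category D]
    [HasPullbacks C] [HasPullbacks D]
    (L : C ⥤ D) (R : D ⥤ C) (adj : L ⊣ R) (x : C) :
    Nonempty ((Over.post L : Over x ⥤ Over (L.obj x)) ⊣
      (Over.post R ⋙ Over.pullback (adj.unit.app x))) := by
  refine ⟨Adjunction.mkOfHomEquiv
    { homEquiv := fun f g =>
        { toFun := fun k => Over.homMk
            (pullback.lift (adj.homEquiv _ _ k.left) f.hom
              (by
                have hk : k.left ≫ g.hom = L.map f.hom := Over.w k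
                erw [adj.homEquiv_unit, Category.assoc, ← R.map_comp, hk]
                exact (adj.unit.naturality f.hom).symm))
            (by exact pullback.lift_snd _ _ _)
          invFun := fun m => Over.homMk
            ((adj.homEquiv _ _).symm (m.left ≫ pullback.fst _ _))
            (by
              have hm := Over.w m
              dsimp at hm ⊢
              have h1 : (m.left ≫ pullback.fst (R.map g.hom) (adj.unit.app x))
                  ≫ R.map g.hom = f.hom ≫ adj.unit.app x := by
                erw [Category.assoc, pullback.condition, ← Category.assoc, hm]
              erw [← adj.homEquiv_naturality_right_symm, h1,
                adj.homEquiv_naturality_left_symm]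
              simp [Adjunction.homEquiv_counit]
              rfl)
          left_inv := fun k => by
            ext
            exact (congrArg (adj.homEquiv _ _).symm (pullback.lift_fst _ _ _)).trans
              ((adj.homEquiv _ _).symm_apply_apply _)
          right_inv := fun m => by
            ext
            dsimp
            ext
            · exact (pullback.lift_fst _ _ _).trans ((adj.homEquiv _ _).apply_symm_apply _)
            · exact (pullback.lift_snd _ _ _).trans (Over.w m).symm }
      homEquiv_naturality_left_symm := fun k m => by
        ext
        exact (congrArg (adj.homEquiv _ _).symm (Category.assoc _ _ _)).trans
          (adj.homEquiv_naturality_left_symm _ _)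
      homEquiv_naturality_right := fun k m => by
        ext
        dsimp
        ext
        · refine (pullback.lift_fst _ _ _).trans ((adj.homEquiv_naturality_right _ _).trans ?_)
          exact ((congrArg (· ≫ R.map m.left) (pullback.lift_fst _ _ _)).symm.trans
            (Category.assoc _ _ _)).trans (((congrArg (_ ≫ ·) (pullback.lift_fst _ _ _)).symm).trans
            (Category.assoc _ _ _).symm)
        · refine (pullback.lift_snd _ _ _).trans ?_
          exact ((pullback.lift_snd _ _ _).symm.trans
            (congrArg (_ ≫ ·) (pullback.lift_snd _ _ _).symm)).trans (Category.assoc _ _ _).symm }⟩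
end

section
/- Let p : E → [1] be a cocartesian fibration classifying a functor F : C → D, where C and D are the fibers over 0 and 1 respectively. If C and D admit limits of shape J and {s_j}_{j∈J} is a J-shaped diagram of sections of p all of whose structure morphisms s_j(0) → s_j(1) are cocartesian, then the structure morphism lim_j s_j(0) → lim_j s_j(1) of the limit section is cocartesian if and only if the canonical comparison map F(lim_j s_j(0)) → lim_j F(s_j(0)) is an isomorphism (in particular, it is cocartesian whenever F preserves J-limits). -/
open CategoryTheory CategoryTheory.Limits

/-- Let `p : E → [1]` be a cocartesian fibration classifying a functor
`F : C ⥤ D` (so `C` and `D` are the fibers over `0` and `1`).  A `J`-shaped diagram of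
sections of `p` is the data of diagrams `s₀ : J ⥤ C`, `s₁ : J ⥤ D` together with the
structure maps `t : s₀ ⋙ F ⟶ s₁`; the sections are all cocartesian precisely when every
component `t.app j` is an isomorphism.  The limit section is computed fiberwise, and its
structure morphism `F(lim s₀) ⟶ lim s₁` is the composite `limMap t ∘ limit.post s₀ F`.
Then this structure morphism is cocartesian (an isomorphism) if and only if the canonical
comparison `limit.post s₀ F : F(lim s₀) ⟶ lim (s₀ ⋙ F)` is an isomorphism; in particular
it is cocartesian whenever `F` preserves `J`-limits. -/
theorem stmt_5 {J C D : Type*} [Category J] [Category C] [Category D]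
    [HasLimitsOfShape J C] [HasLimitsOfShape J D]
    (F : C ⥤ D) (s₀ : J ⥤ C) (s₁ : J ⥤ D) (t : s₀ ⋙ F ⟶ s₁)
    (ht : ∀ j : J, IsIso (t.app j)) :
    (IsIso (limit.post s₀ F ≫ limMap t) ↔ IsIso (limit.post s₀ F)) ∧
    (Nonempty (PreservesLimitsOfShape J F) → IsIso (limit.post s₀ F ≫ limMap t)) := by
  have : IsIso t := NatIso.isIso_of_isIso_app t
  have h1 : IsIso (limMap t) := by
    have : limMap t = (lim.mapIso (asIso t)).hom := rfl
    rw [this]; infer_instance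
  constructor
  · constructor
    · intro h
      have : IsIso ((limit.post s₀ F ≫ limMap t) ≫ inv (limMap t)) := by infer_instance
      simpa using this
    · intro h; infer_instance
  · rintro ⟨⟨P⟩⟩
    have : IsIso (limit.post s₀ F) := by infer_instance
    infer_instance
end

section
/- Let 𝕃 : X → Y be a functor over a category I between Grothendieck opfibrations encoding a natural transformation η : F ⇒ G of functors I → Cat whose components η_i are left adjoints. Then 𝕃 admits a right adjoint 𝕁 : Y → X over I (the unit and counit lie over the identity of I), given fiberwise by the right adjoints of η_i; moreover 𝕁 preserves cocartesian edges over a morphism f : i → j if and only if the naturality square (η_i, F(f), G(f), η_j) is left adjointable (its Beck–Chevalley transformation F(f) ∘ R_i ⇒ R_j ∘ G(f) is an isomorphism). -/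
open CategoryTheory

universe w v u v' u'

section Stmt19Aux
variable {I : Type u} [Category.{v} I] {F G : I ⥤ Cat.{v', u'}}
  (η : F ⟶ G) (R : ∀ i : I, G.obj i ⥤ F.obj i)
  (A : ∀ i : I, (η.app i).toFunctor ⊣ R i)

private def stmt19e (X : Grothendieck F) (Y : Grothendieck G) :
    ((Grothendieck.map η).obj X ⟶ Y) ≃ (X ⟶ (⟨Y.base, (R Y.base).obj Y.fiber⟩ : Grothendieck F)) where
  toFun g :=
    ⟨g.base, ((A Y.base).homEquiv _ _) ((eqToHom (η.naturality g.base)).toNatTrans.app X.fiber ≫ g.fiber)⟩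
  invFun h :=
    ⟨h.base, (eqToHom (η.naturality h.base).symm).toNatTrans.app X.fiber ≫ ((A Y.base).homEquiv _ _).symm h.fiber⟩
  left_inv g := by
    fapply Grothendieck.ext
    · rfl
    · simp [Cat.eqToHom_app]
      erw [eqToHom_app, eqToHom_trans_assoc, eqToHom_refl, Category.id_comp]
  right_inv h := by
    fapply Grothendieck.ext
    · rfl
    · simp [Cat.eqToHom_app]
      erw [eqToHom_app, eqToHom_trans_assoc, eqToHom_refl, Category.id_comp, Equiv.apply_symm_apply]

private lemma stmt19eqAux {C : Type*} [Category C] {a b c d e b' z : C}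
    (e1 : a ⟶ b) (e2 : b ⟶ c) (e3 : c ⟶ d) (e4 : d ⟶ e) (e1' : a ⟶ b') (e5 : b' ⟶ e)
    (K : e ⟶ z) (h1 : a = b) (h2 : b = c) (h1' : a = b')
    (he1 : e1 = eqToHom h1) (he2 : e2 = eqToHom h2) (he1' : e1' = eqToHom h1')
    (h3 : c = d) (h4 : d = e) (h5 : b' = e)
    (he3 : e3 = eqToHom h3) (he4 : e4 = eqToHom h4) (he5 : e5 = eqToHom h5) :
    e1 ≫ e2 ≫ e3 ≫ e4 ≫ K = e1' ≫ e5 ≫ K := by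
  subst he1 he2 he3 he4 he1' he5
  simp

private lemma stmt19he (X' X : Grothendieck F) (Y : Grothendieck G)
    (f : X' ⟶ X) (g : (Grothendieck.map η).obj X ⟶ Y) :
    stmt19e η R A X' Y ((Grothendieck.map η).map f ≫ g) = f ≫ stmt19e η R A X Y g := by
  simp only [stmt19e, Equiv.coe_fn_mk]
  revert g
  dsimp only [Grothendieck.map]
  intro g
  fapply Grothendieck.ext
  · rfl
  · simp only [Grothendieck.comp_fiber, Grothendieck.comp_base]
    rw [← Adjunction.homEquiv_naturality_left, ← Adjunction.homEquiv_naturality_left]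
    erw [← Adjunction.homEquiv_naturality_left]
    refine congrArg ((A Y.base).homEquiv _ _) ?_
    erw [(eqToHom (η.naturality g.base)).toNatTrans.naturality_assoc f.fiber]
    simp [eqToHom_map]
    refine stmt19eqAux _ _ _ _ _ _ _ ?h1 ?h2 ?h1' ?he1 ?he2 ?he1' _ _ _ rfl rfl rfl
    case he1 => exact eqToHom_map _ _
    case he2 => exact Cat.eqToHom_app _ _ _ _
    case he1' => exact eqToHom_map _ _

private def stmt19J : Grothendieck G ⥤ Grothendieck F :=
  Adjunction.rightAdjointOfEquiv (fun X Y => stmt19e η R A X Y) (stmt19he η R A)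

private def stmt19adj : Grothendieck.map η ⊣ stmt19J η R A :=
  Adjunction.adjunctionOfEquivRight _ _

private lemma stmt19idAux {C : Type*} [Category C] {a b : C} (h1 : a = a) (h2 : b = b)
    (k : a ⟶ b) : 𝟙 a ≫ k = eqToHom h1 ≫ k ≫ eqToHom h2 := by
  simp

private lemma stmt19mateAux {C D E' : Type*} [Category C] [Category D] [Category E']
    {L : C ⥤ D} {Rj : D ⥤ C} (adj : L ⊣ Rj) (Gf : E' ⥤ D) {a a' : C} {b1 : D} {e1 e2 e3 w : E'}
    (h0 : a = a') (h1 : L.obj a = b1) (h2 : b1 = Gf.obj e1) (h3 : e1 = e2) (h4 : e2 = e3)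
    (h5 : L.obj a' = Gf.obj e3)
    (E1 : L.obj a ⟶ b1) (E2 : b1 ⟶ Gf.obj e1) (E3 : e1 ⟶ e2) (E4 : e2 ⟶ e3)
    (E5 : L.obj a' ⟶ Gf.obj e3) (c : e3 ⟶ w)
    (he1 : E1 = eqToHom h1) (he2 : E2 = eqToHom h2) (he3 : E3 = eqToHom h3) (he4 : E4 = eqToHom h4)
    (he5 : E5 = eqToHom h5) :
    adj.homEquiv a (Gf.obj w) (E1 ≫ E2 ≫ Gf.map (E3 ≫ E4 ≫ c)) =
      eqToHom h0 ≫ adj.unit.app a' ≫ Rj.map E5 ≫ Rj.map (Gf.map c) ≫ 𝟙 (Rj.obj (Gf.obj w)) := by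
  subst he1 he2 he3 he4 he5 h0 h3 h4
  simp [Adjunction.homEquiv_unit]

private lemma stmt19J_map_fiber {i j : I} (f : i ⟶ j) (y : G.obj i) :
    ((stmt19J η R A).map
        ({ base := f, fiber := 𝟙 ((G.map f).toFunctor.obj y) } :
          (⟨i, y⟩ : Grothendieck G) ⟶ ⟨j, (G.map f).toFunctor.obj y⟩)).fiber =
      eqToHom (by simp [stmt19J, Adjunction.rightAdjointOfEquiv, stmt19e]; exact congrArg (fun k => (F.map k).toFunctor.obj ((R i).obj y)) (Category.id_comp f)) ≫
        ((mateEquiv (A i) (A j))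
          (eqToHom (congrArg Cat.Hom.toFunctor (η.naturality f) :
            (F.map f).toFunctor ⋙ (η.app j).toFunctor =
              (η.app i).toFunctor ⋙ (G.map f).toFunctor))).app y := by
  dsimp only [stmt19J, stmt19e, Adjunction.rightAdjointOfEquiv, Equiv.coe_fn_mk, Equiv.coe_fn_symm_mk]
  simp only [Functor.rightUnitor_inv_app, Functor.associator_hom_app, Functor.associator_inv_app,
    Functor.leftUnitor_hom_app, Functor.comp_map, Functor.comp_obj, Category.id_comp, TwoSquare.natTrans,
    Grothendieck.comp_fiber, Grothendieck.comp_base, Grothendieck.id_fiber,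
    Adjunction.homEquiv_apply, Adjunction.homEquiv_symm_apply, mateEquiv,
    Cat.eqToHom_app, eqToHom_map, Functor.map_comp, Category.assoc, Category.comp_id,
    eqToHom_trans_assoc, eqToHom_trans, Functor.whiskerLeft_app, Functor.whiskerRight_app, NatTrans.comp_app,
    Equiv.coe_fn_mk]
  refine stmt19mateAux (A j) (G.map f).toFunctor _ ?h1 _ _ _ ?h5 _ _ _ _ _ _ ?he1 rfl rfl rfl ?he5
  case he1 => exact Cat.eqToHom_app _ _ _ _
  case he5 => exact eqToHom_app _ _

private lemma stmt19isIso_eqToHom_comp_iff {C : Type*} [Category C] {X Y Z : C}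
    (p : X = Y) (g : Y ⟶ Z) : IsIso (eqToHom p ≫ g) ↔ IsIso g := by
  subst p; simp

end Stmt19Aux

/-- Let `η : F ⟶ G` be a natural transformation of functors `I ⥤ Cat`
whose components are left adjoints (with chosen right adjoints `R i`), and let
`𝕃 := Grothendieck.map η : ∫F ⥤ ∫G` be the induced functor over `I` between the
Grothendieck constructions.  Then `𝕃` admits a right adjoint `𝕁 : ∫G ⥤ ∫F` over `I`
(the unit and counit lie over identities of `I`), given fiberwise by the right adjoints
`R i`; moreover `𝕁` preserves cocartesian edges over `f : i ⟶ j` (i.e. the fiber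
components of the images of cocartesian lifts of `f` are invertible) if and only if the
naturality square of `η` at `f` is left adjointable, i.e. the Beck–Chevalley mate
`R i ⋙ F(f) ⟶ G(f) ⋙ R j` is an isomorphism. -/

theorem stmt_19 {I : Type u} [Category.{v} I] (F G : I ⥤ Cat.{v', u'})
    (η : F ⟶ G) (R : ∀ i : I, G.obj i ⥤ F.obj i)
    (A : ∀ i : I, (η.app i).toFunctor ⊣ R i) :
    ∃ (𝕁 : Grothendieck G ⥤ Grothendieck F)
      (hobj : ∀ X : Grothendieck G, 𝕁.obj X = ⟨X.base, (R X.base).obj X.fiber⟩)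
      (adj : Grothendieck.map η ⊣ 𝕁),
      𝕁 ⋙ Grothendieck.forget F = Grothendieck.forget G ∧
      (∀ x : Grothendieck F, (adj.unit.app x).base = eqToHom (by simp [hobj])) ∧
      (∀ y : Grothendieck G, (adj.counit.app y).base = eqToHom (by simp [hobj])) ∧
      (∀ {i j : I} (f : i ⟶ j),
        (∀ y : G.obj i,
          IsIso ((𝕁.map
            ({ base := f, fiber := 𝟙 ((G.map f).toFunctor.obj y) } :
              (⟨i, y⟩ : Grothendieck G) ⟶ ⟨j, (G.map f).toFunctor.obj y⟩)).fiber)) ↔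
        IsIso ((mateEquiv (A i) (A j))
          (eqToHom (congrArg Cat.Hom.toFunctor (η.naturality f) :
            (F.map f).toFunctor ⋙ (η.app j).toFunctor =
              (η.app i).toFunctor ⋙ (G.map f).toFunctor)))) := by
  refine ⟨stmt19J η R A, fun _ => rfl, stmt19adj η R A, ?_, ?_, ?_, ?_⟩
  · refine CategoryTheory.Functor.ext (fun X => rfl) (fun X Y g => ?_)
    simp [stmt19J, Adjunction.rightAdjointOfEquiv, stmt19e]
    exact stmt19idAux _ _ _
  · intro x
    simp [stmt19adj, Adjunction.adjunctionOfEquivRight, Adjunction.mkOfHomEquiv, stmt19e]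
    exact (eqToHom_refl _ _).symm
  · intro y
    simp [stmt19adj, Adjunction.adjunctionOfEquivRight, Adjunction.mkOfHomEquiv, stmt19e]
    rfl
  · intro i j f
    refine Iff.trans ?_ (NatTrans.isIso_iff_isIso_app _).symm
    refine forall_congr' fun y => ?_
    rw [stmt19J_map_fiber η R A f y]
    exact stmt19isIso_eqToHom_comp_iff _ _
end
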